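/- Every conflict-free binary matrix M with m rows, no all-zero row, and no all-zero column has at most 2m pairwise distinct columns. -/

import Mathlib

/-- The support of column `j` of binary matrix `M`: the set of rows with a `1` in column `j`. -/
def Supp {α β : Type*} [Fintype α] [DecidableEq α] (M : α → β → Bool) (j : β) : Finset α :=
  Finset.univ.filter (fun r => M r j = true)

/-- `M` is conflict-free: no two columns contain three rows forming the pattern
`[[1,1],[1,0],[0,1]]`. -/
def ConflictFree {α β : Type*} (M : α → β → Bool) : Prop :=
  ∀ i j : β, ¬ ∃ r r' r'' : α, M r i = true ∧ M r j = true ∧ M r' i = true ∧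
    M r' j = false ∧ M r'' i = false ∧ M r'' j = true

/-- `M'` is a row split of `M` via the assignment `f` of rows of `M'` to rows of `M`:
the parts are nonempty (`f` surjective) and each row of `M` is the bitwise OR of its part. -/
def IsRowSplit {α α' β : Type*} (M : α → β → Bool) (M' : α' → β → Bool) (f : α' → α) : Prop :=
  Function.Surjective f ∧ ∀ i j, M i j = true ↔ ∃ r', f r' = i ∧ M' r' j = true

/-- `v` is a vertex of the containment digraph `D_M`, i.e. the support of some column. -/
def IsSupport {α β : Type*} [Fintype α] [DecidableEq α] (M : α → β → Bool)
    (v : Finset α) : Prop := ∃ j, v = Supp M j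

/-- `B` is a branching of the containment digraph `D_M`: its arcs are arcs of `D_M`
(proper inclusions of supports) and every vertex has at most one outgoing arc. -/
def IsBranching {α β : Type*} [Fintype α] [DecidableEq α] (M : α → β → Bool)
    (B : Finset α → Finset α → Prop) : Prop :=
  (∀ u v, B u v → IsSupport M u ∧ IsSupport M v ∧ u ⊂ v) ∧
  (∀ u v w, B u v → B u w → v = w)

/-- The set `U(B)` of `B`-uncovered pairs `(r, v)`: `v` a vertex of `D_M`, `r ∈ v`, and
`r` belongs to no `B`-in-neighbor of `v`. -/
def UncovPairs {α β : Type*} [Fintype α] [DecidableEq α] (M : α → β → Bool)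
    (B : Finset α → Finset α → Prop) : Set (α × Finset α) :=
  {p | IsSupport M p.2 ∧ p.1 ∈ p.2 ∧ ∀ u, B u p.2 → p.1 ∉ u}

/-- The set `I(B)` of `B`-irreducible vertices of `D_M`. -/
def IrredVerts {α β : Type*} [Fintype α] [DecidableEq α] (M : α → β → Bool)
    (B : Finset α → Finset α → Prop) : Set (Finset α) :=
  {v | IsSupport M v ∧ ∃ r ∈ v, ∀ u, B u v → r ∉ u}

/-- `γ(M)`: the minimum number of rows of a conflict-free row split of `M`. -/
noncomputable def gammaM {α β : Type*} (M : α → β → Bool) : ℕ :=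
  sInf {k | ∃ (m' : ℕ) (M' : Fin m' → β → Bool) (f : Fin m' → α),
    IsRowSplit M M' f ∧ ConflictFree M' ∧ k = m'}

/-- `η(M)`: the minimum number of pairwise distinct rows of a conflict-free row split of `M`. -/
noncomputable def etaM {α β : Type*} [Fintype β] [DecidableEq β] (M : α → β → Bool) : ℕ :=
  sInf {k | ∃ (m' : ℕ) (M' : Fin m' → β → Bool) (f : Fin m' → α),
    IsRowSplit M M' f ∧ ConflictFree M' ∧
    k = (Finset.univ.image (fun r : Fin m' => fun j => M' r j)).card}

/-- `β(M)`: the minimum number of uncovered pairs over all branchings of `D_M`. -/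
noncomputable def betaM {α β : Type*} [Fintype α] [DecidableEq α] (M : α → β → Bool) : ℕ :=
  sInf {k | ∃ B, IsBranching M B ∧ (UncovPairs M B).ncard = k}

/-- `ζ(M)`: the minimum number of irreducible vertices over all branchings of `D_M`. -/
noncomputable def zetaM {α β : Type*} [Fintype α] [DecidableEq α] (M : α → β → Bool) : ℕ :=
  sInf {k | ∃ B, IsBranching M B ∧ (IrredVerts M B).ncard = k}

lemma exists_maximal_compat {α : Type*} [Preorder α] (s : Finset α) (h : s.Nonempty) :
    ∃ m ∈ s, ∀ x ∈ s, ¬ m < x := by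
  obtain ⟨i, hi⟩ := Finset.exists_maximal h
  exact ⟨i, hi.1, fun x hx hlt => hlt.not_ge (hi.2 hx hlt.le)⟩

lemma exists_maximal_above {α : Type*} [DecidableEq α] (F : Finset (Finset α)) (w : Finset α)
    (hw : w ∈ F) : ∃ v ∈ F, w ⊆ v ∧ ∀ u ∈ F, ¬ v ⊂ u := by
  obtain ⟨v, hv, hmax⟩ := exists_maximal_compat (F.filter (fun u => w ⊆ u))
    ⟨w, by simp [hw]⟩
  rw [Finset.mem_filter] at hv
  refine ⟨v, hv.1, hv.2, fun u hu hlt => hmax u ?_ hlt⟩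
  exact Finset.mem_filter.mpr ⟨hu, hv.2.trans hlt.subset⟩

lemma laminar_bound {α : Type*} [DecidableEq α] (F : Finset (Finset α)) :
    (∀ v ∈ F, ∀ u ∈ F, v ⊆ u ∨ u ⊆ v ∨ Disjoint v u) →
    (∀ v ∈ F, v.Nonempty) →
    F.card + (F.filter (fun v => ∀ u ∈ F, ¬ v ⊂ u)).card ≤ 2 * (F.sup id).card := by
  induction F using Finset.strongInduction with
  | _ F ih =>
  intro hlam hne
  rcases F.eq_empty_or_nonempty with rfl | hFne
  · simp
  obtain ⟨v, hvF, hvmax⟩ := exists_maximal_compat F hFne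
  set F₁ := F.filter (fun u => u ⊆ v) with hF₁
  set F₂ := F.filter (fun u => ¬ u ⊆ v) with hF₂
  have hvF₁ : v ∈ F₁ := Finset.mem_filter.mpr ⟨hvF, subset_rfl⟩
  have hdisj2 : ∀ u ∈ F₂, Disjoint v u := by
    intro u hu
    rw [Finset.mem_filter] at hu
    rcases hlam v hvF u hu.1 with h | h | h
    · rcases eq_or_ne v u with rfl | hne'
      · exact absurd subset_rfl hu.2
      · exact absurd (HasSubset.Subset.ssubset_of_ne h hne') (hvmax u hu.1)
    · exact absurd h hu.2
    · exact h
  rcases F₂.eq_empty_or_nonempty with hF₂e | hF₂ne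
  · -- all sets are contained in v
    have hall : ∀ u ∈ F, u ⊆ v := by
      intro u hu
      by_contra hc
      have : u ∈ F₂ := Finset.mem_filter.mpr ⟨hu, hc⟩
      simp [hF₂e] at this
    have hsupv : F.sup id = v :=
      le_antisymm (Finset.sup_le fun u hu => hall u hu) (Finset.le_sup (f := id) hvF)
    have hT : F.filter (fun w => ∀ u ∈ F, ¬ w ⊂ u) = {v} := by
      apply Finset.ext
      intro w
      simp only [Finset.mem_filter, Finset.mem_singleton]
      constructor
      · rintro ⟨hwF, hwmax⟩
        by_contra hwv
        exact hwmax v hvF (HasSubset.Subset.ssubset_of_ne (hall w hwF) hwv)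
      · rintro rfl; exact ⟨hvF, hvmax⟩
    rw [hsupv, hT, Finset.card_singleton]
    have hvpos : 1 ≤ v.card := Finset.card_pos.mpr (hne v hvF)
    set F' := F.erase v with hF'
    have hcardF : F.card = F'.card + 1 := by
      rw [hF', Finset.card_erase_of_mem hvF]
      have : 0 < F.card := Finset.card_pos.mpr ⟨v, hvF⟩
      omega
    rcases F'.eq_empty_or_nonempty with hF'e | hF'ne
    · have : F'.card = 0 := by rw [hF'e]; rfl
      omega
    · have hF'sub : F' ⊂ F := Finset.erase_ssubset hvF
      have hlam' : ∀ a ∈ F', ∀ b ∈ F', a ⊆ b ∨ b ⊆ a ∨ Disjoint a b :=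
        fun a ha b hb => hlam a (Finset.mem_of_mem_erase ha) b (Finset.mem_of_mem_erase hb)
      have hne' : ∀ a ∈ F', a.Nonempty := fun a ha => hne a (Finset.mem_of_mem_erase ha)
      have IH' := ih F' hF'sub hlam' hne'
      have hU'v : F'.sup id ⊆ v :=
        Finset.sup_le fun u hu => hall u (Finset.mem_of_mem_erase hu)
      -- F' has a maximal element
      obtain ⟨u', hu'F', hu'max⟩ := exists_maximal_compat F' hF'ne
      have hu'T : u' ∈ F'.filter (fun w => ∀ u ∈ F', ¬ w ⊂ u) :=
        Finset.mem_filter.mpr ⟨hu'F', hu'max⟩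
      have ht1 : 1 ≤ (F'.filter (fun w => ∀ u ∈ F', ¬ w ⊂ u)).card :=
        Finset.card_pos.mpr ⟨u', hu'T⟩
      by_cases hU'eq : F'.sup id = v
      · -- two distinct maximal elements of F'
        have hu'v : u' ⊂ v := by
          refine HasSubset.Subset.ssubset_of_ne
            (hall u' (Finset.mem_of_mem_erase hu'F')) ?_
          intro h; rw [hF'] at hu'F'; exact (Finset.mem_erase.mp hu'F').1 h
        obtain ⟨x, hxv, hxu'⟩ := Finset.exists_of_ssubset hu'v
        have hxU' : x ∈ F'.sup id := by rw [hU'eq]; exact hxv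
        rw [Finset.mem_sup] at hxU'
        obtain ⟨w, hwF', hxw⟩ := hxU'
        obtain ⟨w'', hw''F', hww'', hw''max⟩ := exists_maximal_above F' w hwF'
        have hxw'' : x ∈ w'' := hww'' hxw
        have hw''T : w'' ∈ F'.filter (fun z => ∀ u ∈ F', ¬ z ⊂ u) :=
          Finset.mem_filter.mpr ⟨hw''F', hw''max⟩
        have hne'' : u' ≠ w'' := fun h => hxu' (h ▸ hxw'')
        have ht2 : 2 ≤ (F'.filter (fun z => ∀ u ∈ F', ¬ z ⊂ u)).card :=
          Finset.one_lt_card.mpr ⟨u', hu'T, w'', hw''T, hne''⟩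
        rw [hU'eq] at IH'
        omega
      · have hU'lt : (F'.sup id).card < v.card :=
          Finset.card_lt_card (HasSubset.Subset.ssubset_of_ne hU'v hU'eq)
        omega
  · -- split into F₁ and F₂
    have hF₁sub : F₁ ⊂ F := by
      refine Finset.ssubset_iff_of_subset (Finset.filter_subset _ _) |>.mpr ?_
      obtain ⟨u, hu⟩ := hF₂ne
      rw [Finset.mem_filter] at hu
      exact ⟨u, hu.1, by simp [hF₁, hu.2]⟩
    have hF₂sub : F₂ ⊂ F := by
      refine Finset.ssubset_iff_of_subset (Finset.filter_subset _ _) |>.mpr ?_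
      exact ⟨v, hvF, by simp [hF₂]⟩
    have hlam₁ : ∀ a ∈ F₁, ∀ b ∈ F₁, a ⊆ b ∨ b ⊆ a ∨ Disjoint a b :=
      fun a ha b hb => hlam a (Finset.filter_subset _ _ ha) b (Finset.filter_subset _ _ hb)
    have hlam₂ : ∀ a ∈ F₂, ∀ b ∈ F₂, a ⊆ b ∨ b ⊆ a ∨ Disjoint a b :=
      fun a ha b hb => hlam a (Finset.filter_subset _ _ ha) b (Finset.filter_subset _ _ hb)
    have hne₁ : ∀ a ∈ F₁, a.Nonempty := fun a ha => hne a (Finset.filter_subset _ _ ha)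
    have hne₂ : ∀ a ∈ F₂, a.Nonempty := fun a ha => hne a (Finset.filter_subset _ _ ha)
    have IH₁ := ih F₁ hF₁sub hlam₁ hne₁
    have IH₂ := ih F₂ hF₂sub hlam₂ hne₂
    -- sup facts
    have hsup₁ : F₁.sup id = v :=
      le_antisymm (Finset.sup_le fun u hu => (Finset.mem_filter.mp hu).2)
        (Finset.le_sup (f := id) hvF₁)
    have hdisjsup : Disjoint (F₁.sup id) (F₂.sup id) := by
      rw [hsup₁, Finset.disjoint_sup_right]
      exact fun u hu => hdisj2 u hu
    have hUsub : F₁.sup id ∪ F₂.sup id ⊆ F.sup id :=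
      Finset.union_subset (Finset.sup_mono (Finset.filter_subset _ _))
        (Finset.sup_mono (Finset.filter_subset _ _))
    have hUcard : (F₁.sup id).card + (F₂.sup id).card ≤ (F.sup id).card := by
      rw [← Finset.card_union_of_disjoint hdisjsup]
      exact Finset.card_le_card hUsub
    -- cardinality split of F
    have hFsplit : F₁.card + F₂.card = F.card :=
      Finset.card_filter_add_card_filter_not _
    -- maximal elements split
    have hTsub : F.filter (fun w => ∀ u ∈ F, ¬ w ⊂ u) ⊆
        (F₁.filter (fun w => ∀ u ∈ F₁, ¬ w ⊂ u)) ∪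
        (F₂.filter (fun w => ∀ u ∈ F₂, ¬ w ⊂ u)) := by
      intro w hw
      rw [Finset.mem_filter] at hw
      rw [Finset.mem_union]
      by_cases hwv : w ⊆ v
      · exact Or.inl (Finset.mem_filter.mpr ⟨Finset.mem_filter.mpr ⟨hw.1, hwv⟩,
          fun u hu => hw.2 u (Finset.filter_subset _ _ hu)⟩)
      · exact Or.inr (Finset.mem_filter.mpr ⟨Finset.mem_filter.mpr ⟨hw.1, hwv⟩,
          fun u hu => hw.2 u (Finset.filter_subset _ _ hu)⟩)
    have hTcard : (F.filter (fun w => ∀ u ∈ F, ¬ w ⊂ u)).card ≤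
        (F₁.filter (fun w => ∀ u ∈ F₁, ¬ w ⊂ u)).card +
        (F₂.filter (fun w => ∀ u ∈ F₂, ¬ w ⊂ u)).card :=
      le_trans (Finset.card_le_card hTsub) (Finset.card_union_le _ _)
    omega

/-- A conflict-free binary matrix with `m` rows, no all-zero row and no all-zero column,
has at most `2m` pairwise distinct columns. -/
theorem stmt_5 {m n : ℕ} (M : Fin m → Fin n → Bool)
    (hrow : ∀ r, ∃ j, M r j = true)
    (hcol : ∀ j, ∃ r, M r j = true)
    (hcf : ConflictFree M) :
    (Finset.univ.image (fun j : Fin n => fun r : Fin m => M r j)).card ≤ 2 * m := by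
  classical
  set g : (Fin m → Bool) → Finset (Fin m) :=
    fun c => Finset.univ.filter (fun r => c r = true) with hg
  have hginj : Function.Injective g := by
    intro c₁ c₂ h
    funext r
    have : (r ∈ g c₁) = (r ∈ g c₂) := by rw [h]
    simp only [hg, Finset.mem_filter, Finset.mem_univ, true_and, eq_iff_iff] at this
    cases h1 : c₁ r <;> cases h2 : c₂ r <;> simp [h1, h2] at this ⊢
  have hcardeq : (Finset.univ.image (fun j : Fin n => fun r : Fin m => M r j)).card
      = (Finset.univ.image (fun j : Fin n => Supp M j)).card := by
    rw [← Finset.card_image_of_injective _ hginj, Finset.image_image]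
    rfl
  rw [hcardeq]
  set F := Finset.univ.image (fun j : Fin n => Supp M j) with hF
  have hlam : ∀ v ∈ F, ∀ u ∈ F, v ⊆ u ∨ u ⊆ v ∨ Disjoint v u := by
    intro v hv u hu
    rw [hF, Finset.mem_image] at hv hu
    obtain ⟨i, -, rfl⟩ := hv
    obtain ⟨j, -, rfl⟩ := hu
    by_contra hc
    push_neg at hc
    obtain ⟨h1, h2, h3⟩ := hc
    rw [Finset.not_disjoint_iff] at h3
    obtain ⟨r, hri, hrj⟩ := h3
    obtain ⟨r', hr'i, hr'j⟩ := Finset.not_subset.mp h1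
    obtain ⟨r'', hr''j, hr''i⟩ := Finset.not_subset.mp h2
    simp only [Supp, Finset.mem_filter, Finset.mem_univ, true_and] at hri hrj hr'i hr'j hr''i hr''j
    have hr'j' : M r' j = false := by simpa using hr'j
    have hr''i' : M r'' i = false := by simpa using hr''i
    exact hcf i j ⟨r, r', r'', hri, hrj, hr'i, hr'j', hr''i', hr''j⟩
  have hne : ∀ v ∈ F, v.Nonempty := by
    intro v hv
    rw [hF, Finset.mem_image] at hv
    obtain ⟨j, -, rfl⟩ := hv
    obtain ⟨r, hr⟩ := hcol j
    exact ⟨r, by simp [Supp, hr]⟩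
  have h := laminar_bound F hlam hne
  have hsup : (F.sup id).card ≤ m := by
    calc (F.sup id).card ≤ (Finset.univ : Finset (Fin m)).card := Finset.card_le_univ _
    _ = m := by simp
  omega
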